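/- Fix m ≥ 0 and rationals q_0 > q_1 > … > q_m, with cells Δ⁰, …, Δ^{m+1} as in the definition of the subdivision Ξ₀ of ℚ, and let (A, B) be a subdivision decomposition of Ξ₀. Then for every 0 ≤ i ≤ m: (1) if B_i = {β} and B_{i+1} = {β'} are both singletons then β = β' (and symmetrically, if A_i and A_{i+1} are both singletons then they are equal); (2) if B_i = {β} is a singleton and A_{i+1} = {α} is a singleton (or A_i = {α} and B_{i+1} = {β}), then α + β = q_i. This is the first part of the paper's Remark: the translation data (λ_i) associated to a subdivision decomposition satisfy λ_i = λ_{i+1} when a_i = a_{i+1}, and λ_i + λ_{i+1} = Δ₀^i ∩ Δ₀^{i+1} when a_i ≠ a_{i+1}. -/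

import Mathlib

open Pointwise

/-- The cells Δ⁰, …, Δ^{m+1} of the polyhedral subdivision Ξ₀ of ℚ with breakpoints
q_0 > q_1 > … > q_m: Δ⁰ = [q_0, ∞), Δ^i = [q_i, q_{i−1}] for 1 ≤ i ≤ m, and
Δ^{m+1} = (−∞, q_m]. -/
def cell (m : ℕ) (q : Fin (m + 1) → ℚ) (i : Fin (m + 2)) : Set ℚ :=
  if i.val = 0 then Set.Ici (q 0)
  else if h : i.val = m + 1 then Set.Iic (q (Fin.last m))
  else Set.Icc (q ⟨i.val, by have := i.isLt; omega⟩)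
    (q ⟨i.val - 1, by have := i.isLt; omega⟩)

/-- A subdivision decomposition (Ξ̃₀, Ξ̃_t) of Ξ₀: families A_i, B_i of nonempty subsets
of ℚ, each a singleton, a closed bounded interval, or a closed half-line, such that
A_i + B_i = Δ^i (Minkowski sum), every element of A_i (resp. B_i) is ≥ every element of
A_{i+1} (resp. B_{i+1}), and both families cover ℚ. -/
structure SubdivDecomp (m : ℕ) (q : Fin (m + 1) → ℚ) where
  A : Fin (m + 2) → Set ℚ
  B : Fin (m + 2) → Set ℚ
  shapeA : ∀ i, (∃ p r : ℚ, p ≤ r ∧ A i = Set.Icc p r) ∨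
    (∃ p : ℚ, A i = Set.Ici p) ∨ (∃ p : ℚ, A i = Set.Iic p)
  shapeB : ∀ i, (∃ p r : ℚ, p ≤ r ∧ B i = Set.Icc p r) ∨
    (∃ p : ℚ, B i = Set.Ici p) ∨ (∃ p : ℚ, B i = Set.Iic p)
  sum_eq : ∀ i, A i + B i = cell m q i
  monoA : ∀ i : Fin (m + 1), ∀ x ∈ A i.succ, ∀ y ∈ A i.castSucc, x ≤ y
  monoB : ∀ i : Fin (m + 1), ∀ x ∈ B i.succ, ∀ y ∈ B i.castSucc, x ≤ y
  coverA : (⋃ i, A i) = Set.univ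
  coverB : (⋃ i, B i) = Set.univ

/-- A subdivision decomposition is admissible if for each 1 ≤ i ≤ m at least one of
A_i, B_i is a lattice point. -/
def SubdivDecomp.Admissible {m : ℕ} {q : Fin (m + 1) → ℚ} (D : SubdivDecomp m q) : Prop :=
  ∀ i : Fin (m + 2), 1 ≤ i.val → i.val ≤ m →
    (∃ n : ℤ, D.A i = {(n : ℚ)}) ∨ (∃ n : ℤ, D.B i = {(n : ℚ)})

lemma mem_add_singleton' {A : Set ℚ} {β x : ℚ} : x ∈ A + {β} ↔ x - β ∈ A := by
  rw [Set.add_singleton]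
  constructor
  · rintro ⟨y, hy, rfl⟩; simpa using hy
  · intro h; exact ⟨x - β, h, by ring⟩

lemma cell_castSucc_min (m : ℕ) (q : Fin (m + 1) → ℚ) (hq : StrictAnti q) (i : Fin (m + 1)) :
    q i ∈ cell m q i.castSucc ∧ ∀ x ∈ cell m q i.castSucc, q i ≤ x := by
  unfold cell
  rcases Nat.eq_zero_or_pos i.val with h0 | h0
  · have hi : i = 0 := Fin.ext h0
    simp [hi]
  · have h1 : (i.castSucc).val ≠ 0 := by simp [h0.ne']
    have h2 : (i.castSucc).val ≠ m + 1 := by have := i.isLt; simp; omega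
    rw [if_neg h1, dif_neg h2]
    have he : (⟨(i.castSucc).val, by have := (i.castSucc).isLt; omega⟩ : Fin (m+1)) = i := by
      apply Fin.ext; simp
    rw [he]
    constructor
    · refine ⟨le_refl _, le_of_lt (hq ?_)⟩
      rw [Fin.lt_def]; simp only [Fin.coe_castSucc]; omega
    · exact fun x hx => hx.1

lemma cell_succ_max (m : ℕ) (q : Fin (m + 1) → ℚ) (hq : StrictAnti q) (i : Fin (m + 1)) :
    q i ∈ cell m q i.succ ∧ ∀ x ∈ cell m q i.succ, x ≤ q i := by
  unfold cell
  have h1 : (i.succ).val ≠ 0 := by simp [Fin.val_succ]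
  rcases Nat.lt_or_ge i.val m with hm | hm
  · have h2 : (i.succ).val ≠ m + 1 := by simp [Fin.val_succ]; omega
    rw [if_neg h1, dif_neg h2]
    have he : (⟨(i.succ).val - 1, by have := (i.succ).isLt; omega⟩ : Fin (m+1)) = i := by
      apply Fin.ext; simp
    rw [he]
    constructor
    · refine ⟨le_of_lt (hq ?_), le_refl _⟩
      simp only [Fin.lt_def, Fin.castSucc_mk, Fin.val_succ]; omega
    · exact fun x hx => hx.2
  · have him : i.val = m := by have := i.isLt; omega
    have h2 : (i.succ).val = m + 1 := by simp [Fin.val_succ, him]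
    rw [if_neg h1, dif_pos h2]
    have he : (Fin.last m) = i := by apply Fin.ext; simp [him]
    rw [he]
    exact ⟨Set.mem_Iic.2 le_rfl, fun x hx => hx⟩

lemma min_of_add_singleton {A : Set ℚ} {β c : ℚ} {C : Set ℚ}
    (h : A + {β} = C) (hc : c ∈ C) (hmin : ∀ x ∈ C, c ≤ x) :
    c - β ∈ A ∧ ∀ x ∈ A, c - β ≤ x := by
  have hmem : ∀ x, x ∈ A ↔ x + β ∈ C := by
    intro x
    rw [← h, mem_add_singleton']
    simp
  constructor
  · rw [hmem]; simpa using hc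
  · intro x hx
    have := hmin _ ((hmem x).1 hx)
    linarith

lemma max_of_add_singleton {A : Set ℚ} {β c : ℚ} {C : Set ℚ}
    (h : A + {β} = C) (hc : c ∈ C) (hmax : ∀ x ∈ C, x ≤ c) :
    c - β ∈ A ∧ ∀ x ∈ A, x ≤ c - β := by
  have hmem : ∀ x, x ∈ A ↔ x + β ∈ C := by
    intro x
    rw [← h, mem_add_singleton']
    simp
  constructor
  · rw [hmem]; simpa using hc
  · intro x hx
    have := hmax _ ((hmem x).1 hx)
    linarith

namespace SubdivDecomp

variable {m : ℕ} {q : Fin (m + 1) → ℚ}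

lemma nonemptyA (D : SubdivDecomp m q) (i : Fin (m + 2)) : (D.A i).Nonempty := by
  rcases D.shapeA i with ⟨p, r, hpr, h⟩ | ⟨p, h⟩ | ⟨p, h⟩ <;> rw [h]
  · exact Set.nonempty_Icc.2 hpr
  · exact Set.nonempty_Ici
  · exact Set.nonempty_Iic

lemma nonemptyB (D : SubdivDecomp m q) (i : Fin (m + 2)) : (D.B i).Nonempty := by
  rcases D.shapeB i with ⟨p, r, hpr, h⟩ | ⟨p, h⟩ | ⟨p, h⟩ <;> rw [h]
  · exact Set.nonempty_Icc.2 hpr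
  · exact Set.nonempty_Ici
  · exact Set.nonempty_Iic

lemma monoA' (D : SubdivDecomp m q) (j k : Fin (m + 2)) (h : j.val + 1 = k.val) :
    ∀ x ∈ D.A k, ∀ y ∈ D.A j, x ≤ y := by
  have hj : j.val < m + 1 := by have := k.isLt; omega
  have h1 : ((⟨j.val, hj⟩ : Fin (m + 1)).castSucc) = j := by apply Fin.ext; simp
  have h2 : ((⟨j.val, hj⟩ : Fin (m + 1)).succ) = k := by apply Fin.ext; simp [Fin.val_succ]; omega
  intro x hx y hy
  rw [← h2] at hx
  rw [← h1] at hy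
  exact D.monoA ⟨j.val, hj⟩ x hx y hy

lemma monoB' (D : SubdivDecomp m q) (j k : Fin (m + 2)) (h : j.val + 1 = k.val) :
    ∀ x ∈ D.B k, ∀ y ∈ D.B j, x ≤ y := by
  have hj : j.val < m + 1 := by have := k.isLt; omega
  have h1 : ((⟨j.val, hj⟩ : Fin (m + 1)).castSucc) = j := by apply Fin.ext; simp
  have h2 : ((⟨j.val, hj⟩ : Fin (m + 1)).succ) = k := by apply Fin.ext; simp [Fin.val_succ]; omega
  intro x hx y hy
  rw [← h2] at hx
  rw [← h1] at hy
  exact D.monoB ⟨j.val, hj⟩ x hx y hy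

lemma chainA (D : SubdivDecomp m q) :
    ∀ d : ℕ, ∀ j k : Fin (m + 2), j.val + 1 + d = k.val →
      ∀ x ∈ D.A k, ∀ y ∈ D.A j, x ≤ y := by
  intro d
  induction d with
  | zero => exact fun j k h => D.monoA' j k (by omega)
  | succ n ih =>
    intro j k h x hx y hy
    have hj' : j.val + 1 < m + 2 := by have := k.isLt; omega
    set j' : Fin (m + 2) := ⟨j.val + 1, hj'⟩ with hj'def
    obtain ⟨z, hz⟩ := D.nonemptyA j'
    have h1 : x ≤ z := ih j' k (by simp [hj'def]; omega) x hx z hz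
    have h2 : z ≤ y := D.monoA' j j' rfl z hz y hy
    linarith

lemma chainB (D : SubdivDecomp m q) :
    ∀ d : ℕ, ∀ j k : Fin (m + 2), j.val + 1 + d = k.val →
      ∀ x ∈ D.B k, ∀ y ∈ D.B j, x ≤ y := by
  intro d
  induction d with
  | zero => exact fun j k h => D.monoB' j k (by omega)
  | succ n ih =>
    intro j k h x hx y hy
    have hj' : j.val + 1 < m + 2 := by have := k.isLt; omega
    set j' : Fin (m + 2) := ⟨j.val + 1, hj'⟩ with hj'def
    obtain ⟨z, hz⟩ := D.nonemptyB j'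
    have h1 : x ≤ z := ih j' k (by simp [hj'def]; omega) x hx z hz
    have h2 : z ≤ y := D.monoB' j j' rfl z hz y hy
    linarith

end SubdivDecomp

/-- The first part of the paper's Remark: for a subdivision decomposition of Ξ₀,
adjacent singleton factors on the same side agree (λ_i = λ_{i+1} when a_i = a_{i+1}),
while adjacent singleton factors on opposite sides sum to the breakpoint
(λ_i + λ_{i+1} = Δ₀^i ∩ Δ₀^{i+1} = q_i when a_i ≠ a_{i+1}). -/
theorem decomposition_translation_data (m : ℕ) (q : Fin (m + 1) → ℚ)
    (hq : StrictAnti q) (D : SubdivDecomp m q) :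
    ∀ i : Fin (m + 1),
      (∀ β β' : ℚ, D.B i.castSucc = {β} → D.B i.succ = {β'} → β = β') ∧
      (∀ α α' : ℚ, D.A i.castSucc = {α} → D.A i.succ = {α'} → α = α') ∧
      (∀ β α : ℚ, D.B i.castSucc = {β} → D.A i.succ = {α} → α + β = q i) ∧
      (∀ α β : ℚ, D.A i.castSucc = {α} → D.B i.succ = {β} → α + β = q i) := by
  intro i
  obtain ⟨hcmin, hcmin'⟩ := cell_castSucc_min m q hq i
  obtain ⟨hcmax, hcmax'⟩ := cell_succ_max m q hq i
  have hAminB : ∀ β : ℚ, D.B i.castSucc = {β} →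
      q i - β ∈ D.A i.castSucc ∧ ∀ x ∈ D.A i.castSucc, q i - β ≤ x := by
    intro β hβ
    have h := D.sum_eq i.castSucc
    rw [hβ] at h
    exact min_of_add_singleton h hcmin hcmin'
  have hAmaxB : ∀ β : ℚ, D.B i.succ = {β} →
      q i - β ∈ D.A i.succ ∧ ∀ x ∈ D.A i.succ, x ≤ q i - β := by
    intro β hβ
    have h := D.sum_eq i.succ
    rw [hβ] at h
    exact max_of_add_singleton h hcmax hcmax'
  have hBminA : ∀ α : ℚ, D.A i.castSucc = {α} →
      q i - α ∈ D.B i.castSucc ∧ ∀ x ∈ D.B i.castSucc, q i - α ≤ x := by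
    intro α hα
    have h := D.sum_eq i.castSucc
    rw [hα, add_comm] at h
    exact min_of_add_singleton h hcmin hcmin'
  have hBmaxA : ∀ α : ℚ, D.A i.succ = {α} →
      q i - α ∈ D.B i.succ ∧ ∀ x ∈ D.B i.succ, x ≤ q i - α := by
    intro α hα
    have h := D.sum_eq i.succ
    rw [hα, add_comm] at h
    exact max_of_add_singleton h hcmax hcmax'
  refine ⟨?_, ?_, ?_, ?_⟩
  · -- B singletons
    intro β β' hβ hβ'
    obtain ⟨hmem1, hmin1⟩ := hAminB β hβ
    obtain ⟨hmem2, hmax2⟩ := hAmaxB β' hβ'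
    have hle : β ≤ β' := by
      have := D.monoA i _ hmem2 _ hmem1
      linarith
    by_contra hne
    have hlt : β < β' := lt_of_le_of_ne hle hne
    set x : ℚ := ((q i - β') + (q i - β)) / 2 with hx
    have hx1 : q i - β' < x := by rw [hx]; linarith
    have hx2 : x < q i - β := by rw [hx]; linarith
    have : x ∈ ⋃ l, D.A l := by rw [D.coverA]; trivial
    obtain ⟨l, hl⟩ := Set.mem_iUnion.1 this
    rcases Nat.lt_trichotomy l.val i.val with h | h | h
    · have := D.chainA (i.val - l.val - 1) l i.castSucc (by simp; omega) _ hmem1 x hl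
      linarith
    · have hli : l = i.castSucc := by apply Fin.ext; simp [h]
      have := hmin1 x (hli ▸ hl)
      linarith
    · rcases Nat.lt_or_ge (i.val + 1) l.val with h' | h'
      · have := D.chainA (l.val - i.val - 2) i.succ l (by simp [Fin.val_succ]; omega) x hl _ hmem2
        linarith
      · have hli : l = i.succ := by apply Fin.ext; simp [Fin.val_succ]; omega
        have := hmax2 x (hli ▸ hl)
        linarith
  · -- A singletons
    intro α α' hα hα'
    obtain ⟨hmem1, hmin1⟩ := hBminA α hα
    obtain ⟨hmem2, hmax2⟩ := hBmaxA α' hα'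
    have hle : α ≤ α' := by
      have := D.monoB i _ hmem2 _ hmem1
      linarith
    by_contra hne
    have hlt : α < α' := lt_of_le_of_ne hle hne
    set x : ℚ := ((q i - α') + (q i - α)) / 2 with hx
    have hx1 : q i - α' < x := by rw [hx]; linarith
    have hx2 : x < q i - α := by rw [hx]; linarith
    have : x ∈ ⋃ l, D.B l := by rw [D.coverB]; trivial
    obtain ⟨l, hl⟩ := Set.mem_iUnion.1 this
    rcases Nat.lt_trichotomy l.val i.val with h | h | h
    · have := D.chainB (i.val - l.val - 1) l i.castSucc (by simp; omega) _ hmem1 x hl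
      linarith
    · have hli : l = i.castSucc := by apply Fin.ext; simp [h]
      have := hmin1 x (hli ▸ hl)
      linarith
    · rcases Nat.lt_or_ge (i.val + 1) l.val with h' | h'
      · have := D.chainB (l.val - i.val - 2) i.succ l (by simp [Fin.val_succ]; omega) x hl _ hmem2
        linarith
      · have hli : l = i.succ := by apply Fin.ext; simp [Fin.val_succ]; omega
        have := hmax2 x (hli ▸ hl)
        linarith
  · -- B then A
    intro β α hβ hα
    obtain ⟨hmem1, hmin1⟩ := hAminB β hβ
    obtain ⟨hmem2, hmax2⟩ := hBmaxA α hα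
    have hα' : α ∈ D.A i.succ := by rw [hα]; rfl
    have hβ' : β ∈ D.B i.castSucc := by rw [hβ]; rfl
    have h1 : α ≤ q i - β := D.monoA i _ hα' _ hmem1
    have h2 : q i - α ≤ β := D.monoB i _ hmem2 _ hβ'
    linarith
  · -- A then B
    intro α β hα hβ
    obtain ⟨hmem1, hmin1⟩ := hBminA α hα
    obtain ⟨hmem2, hmax2⟩ := hAmaxB β hβ
    have hα' : α ∈ D.A i.castSucc := by rw [hα]; rfl
    have hβ' : β ∈ D.B i.succ := by rw [hβ]; rfl
    have h1 : β ≤ q i - α := D.monoB i _ hβ' _ hmem1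
    have h2 : q i - β ≤ α := D.monoA i _ hmem2 _ hα'
    linarith
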